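/- Let I be a Borel-fixed monomial ideal of K[x_0,...,x_n] generated in degrees ≤ m. Suppose x^A is a degree-m monomial not in I that is Borel-maximal among degree-m monomials not in I (i.e., every monomial strictly above x^A in the Borel order on degree-m monomials lies in I). Then for any index i, x_i·x^A ∈ I if and only if i < max(A), where max(A) is the largest index of a variable dividing x^A. -/
import Mathlib


open MvPolynomial

def IsMonomialIdeal {n : ℕ} {K : Type*} [CommRing K]
    (I : Ideal (MvPolynomial (Fin (n + 1)) K)) : Prop :=
  ∀ p ∈ I, ∀ A ∈ p.support, (monomial A (1 : K)) ∈ I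

def BorelCombinatorial {n : ℕ} {K : Type*} [CommRing K]
    (I : Ideal (MvPolynomial (Fin (n + 1)) K)) : Prop :=
  ∀ A : Fin (n + 1) →₀ ℕ, monomial A (1 : K) ∈ I →
    ∀ j : Fin (n + 1), A j ≠ 0 → ∀ i : Fin (n + 1), i < j →
      monomial (A + Finsupp.single i 1 - Finsupp.single j 1) (1 : K) ∈ I

def BorelStep {n : ℕ} (B A : Fin (n + 1) →₀ ℕ) : Prop :=
  ∃ i : Fin n, B i.succ ≠ 0 ∧
    A = B + Finsupp.single i.castSucc 1 - Finsupp.single i.succ 1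

def BorelLE {n : ℕ} (B A : Fin (n + 1) →₀ ℕ) : Prop :=
  Relation.ReflTransGen BorelStep B A

def degSum {n : ℕ} (A : Fin (n + 1) →₀ ℕ) : ℕ := ∑ i, A i

def GeneratedInDegLE {n : ℕ} {K : Type*} [CommRing K]
    (I : Ideal (MvPolynomial (Fin (n + 1)) K)) (m : ℕ) : Prop :=
  ∀ C : Fin (n + 1) →₀ ℕ, monomial C (1 : K) ∈ I → m < degSum C →
    ∃ D : Fin (n + 1) →₀ ℕ, monomial D (1 : K) ∈ I ∧ degSum D ≤ m ∧ D ≤ C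

lemma borelLE_move {n : ℕ} : ∀ (d : ℕ) (A : Fin (n+1) →₀ ℕ) (i k : Fin (n+1)),
    (k:ℕ) - i = d → i < k → A k ≠ 0 →
    BorelLE A (A + Finsupp.single i 1 - Finsupp.single k 1) := by
  intro d
  induction d with
  | zero => intro A i k hd h _; exact absurd hd (by omega)
  | succ d ih =>
    intro A i k hd h hk
    have hk1 : 1 ≤ (k : ℕ) := by omega
    have hklt : (k : ℕ) ≤ n := by omega
    obtain ⟨j, hj⟩ : ∃ j : Fin n, (j : ℕ) = (k:ℕ) - 1 := ⟨⟨(k:ℕ)-1, by omega⟩, rfl⟩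
    have hjs : j.succ = k := by
      apply Fin.ext; simp [Fin.val_succ, hj]; omega
    have hcv : (j.castSucc : ℕ) = (k:ℕ) - 1 := hj
    have hne : j.castSucc ≠ k := by
      intro h'; have := congrArg Fin.val h'; rw [hcv] at this; omega
    have step : BorelStep A (A + Finsupp.single j.castSucc 1 - Finsupp.single k 1) := by
      refine ⟨j, by rwa [hjs], ?_⟩
      rw [hjs]
    by_cases hcase : i = j.castSucc
    · rw [hcase]
      exact Relation.ReflTransGen.single step
    · have hilt : i < j.castSucc := by
        have h2 : (i:ℕ) ≠ (k:ℕ) - 1 := fun h' => hcase (Fin.ext (by rw [hcv, h']))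
        exact (Fin.lt_iff_val_lt_val).2 (by omega)
      have hCk : (A + Finsupp.single j.castSucc 1 - Finsupp.single k 1 : Fin (n+1) →₀ ℕ)
          j.castSucc ≠ 0 := by
        have h2 : ¬ k = j.castSucc := fun h' => hne h'.symm
        simp [Finsupp.tsub_apply, Finsupp.single_apply, h2]
      have tail := ih (A + Finsupp.single j.castSucc 1 - Finsupp.single k 1) i j.castSucc
        (by rw [hcv]; omega) hilt hCk
      have heq : (A + Finsupp.single j.castSucc 1 - Finsupp.single k 1)
            + Finsupp.single i 1 - Finsupp.single j.castSucc 1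
          = A + Finsupp.single i 1 - Finsupp.single k 1 := by
        ext a
        simp only [Finsupp.tsub_apply, Finsupp.add_apply, Finsupp.single_apply]
        have hik : i ≠ k := Fin.ne_of_lt h
        have hAk : 1 ≤ A k := Nat.one_le_iff_ne_zero.2 hk
        by_cases h1 : j.castSucc = a <;> by_cases h2 : k = a <;> by_cases h3 : i = a <;>
          simp_all <;> omega
      rw [heq] at tail
      exact Relation.ReflTransGen.head step tail

/-- If `x^A` is a Borel-maximal degree-`m` standard monomial of a Borel-fixed
ideal `I` generated in degrees `≤ m`, then `x_i x^A ∈ I ↔ i < max(A)`. -/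
theorem stmt10 {n m : ℕ} {K : Type*} [Field K]
    (I : Ideal (MvPolynomial (Fin (n + 1)) K)) (hI : IsMonomialIdeal I)
    (hB : BorelCombinatorial I) (hgen : GeneratedInDegLE I m)
    (A : Fin (n + 1) →₀ ℕ) (hdeg : degSum A = m) (hA : monomial A (1 : K) ∉ I)
    (hmax : ∀ C : Fin (n + 1) →₀ ℕ, BorelLE A C → C ≠ A → monomial C (1 : K) ∈ I)
    (k : Fin (n + 1)) (hk : A k ≠ 0) (hkmax : ∀ j : Fin (n + 1), A j ≠ 0 → j ≤ k)
    (i : Fin (n + 1)) :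
    monomial (A + Finsupp.single i 1) (1 : K) ∈ I ↔ i < k := by
  have hmul : ∀ E F : Fin (n+1) →₀ ℕ, monomial E (1:K) ∈ I → monomial (E + F) (1:K) ∈ I := by
    intro E F hE
    have h := I.mul_mem_left (monomial F 1) hE
    rw [monomial_mul, one_mul] at h
    rw [add_comm E F]
    exact h
  constructor
  · intro hmem
    by_contra hki
    push_neg at hki
    have hdeg' : degSum (A + Finsupp.single i 1) = m + 1 := by
      simp [degSum, Finsupp.add_apply, Finsupp.single_apply, Finset.sum_add_distrib,
        Finset.sum_ite_eq, hdeg]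
      exact hdeg
    obtain ⟨D, hD, hDdeg, hDle⟩ := hgen _ hmem (by omega)
    rw [Finsupp.le_def] at hDle
    have hDleA : ∀ a : Fin (n+1), a ≠ i → D a ≤ A a := by
      intro a ha
      have := hDle a
      simp only [Finsupp.add_apply, Finsupp.single_apply] at this
      rw [if_neg (fun h' => ha h'.symm)] at this
      omega
    have hnotle : ¬ D ≤ A := by
      intro hle
      have h := hmul D (A - D) hD
      rw [add_tsub_cancel_of_le hle] at h
      exact hA h
    have hDi : D i = A i + 1 := by
      by_contra hcon
      apply hnotle
      rw [Finsupp.le_def]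
      intro a
      by_cases ha : a = i
      · subst ha
        have := hDle a
        simp only [Finsupp.add_apply, Finsupp.single_apply, if_pos rfl, if_true] at this
        omega
      · exact hDleA a ha
    obtain ⟨j, hjne, hjlt⟩ : ∃ j : Fin (n+1), j ≠ i ∧ D j < A j := by
      by_contra hcon
      push_neg at hcon
      have hlt : degSum A < degSum D := by
        apply Finset.sum_lt_sum
        · intro a _
          by_cases ha : a = i
          · subst ha; omega
          · exact hcon a ha
        · exact ⟨i, Finset.mem_univ i, by omega⟩
      omega
    have hAj : A j ≠ 0 := by omega
    have hji : j < i := lt_of_le_of_ne (le_trans (hkmax j hAj) hki) hjne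
    have hD' := hB D hD i (by omega) j hji
    have hle' : D + Finsupp.single j 1 - Finsupp.single i 1 ≤ A := by
      rw [Finsupp.le_def]
      intro a
      simp only [Finsupp.tsub_apply, Finsupp.add_apply, Finsupp.single_apply]
      by_cases h1 : j = a <;> by_cases h2 : i = a
      · exact absurd (h1.trans h2.symm) hjne
      · subst h1; simp [h2]; omega
      · subst h2; simp [hjne, hDi]
      · simp [h1, h2]; exact hDleA a (fun h' => h2 h'.symm)
    have h := hmul _ (A - (D + Finsupp.single j 1 - Finsupp.single i 1)) hD'
    rw [add_tsub_cancel_of_le hle'] at h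
    exact hA h
  · intro hik
    have hchain := borelLE_move ((k:ℕ) - i) A i k rfl hik hk
    have hCne : A + Finsupp.single i 1 - Finsupp.single k 1 ≠ A := by
      intro h
      have h2 := DFunLike.congr_fun h k
      simp only [Finsupp.tsub_apply, Finsupp.add_apply, Finsupp.single_apply] at h2
      simp only [if_neg (Fin.ne_of_lt hik), if_true] at h2
      have hAk : 1 ≤ A k := Nat.one_le_iff_ne_zero.2 hk
      omega
    have hCI := hmax _ hchain hCne
    have h := hmul _ (Finsupp.single k 1) hCI
    have heq : A + Finsupp.single i 1 - Finsupp.single k 1 + Finsupp.single k 1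
        = A + Finsupp.single i 1 := by
      ext a
      simp only [Finsupp.tsub_apply, Finsupp.add_apply, Finsupp.single_apply]
      have hAk : 1 ≤ A k := Nat.one_le_iff_ne_zero.2 hk
      have hik' : i ≠ k := Fin.ne_of_lt hik
      by_cases h1 : i = a <;> by_cases h2 : k = a <;> simp_all <;> omega
    rw [heq] at h
    exact h
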